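/- Let L ∈ ℝ^{N×N} be the Laplacian matrix of a weighted directed graph G that contains a directed spanning tree but is not strongly connected. Then there exist a permutation matrix T ∈ ℝ^{N×N}, an integer m ∈ {2,3,…,N}, and a partition of {1,…,N} into consecutive blocks of sizes n_1,…,n_m, such that T^⊤ L T is lower block triangular with blocks A_{ij} ∈ ℝ^{n_i×n_j} (i.e., the (i,j) block of T^⊤ L T equals A_{ii} for i = j, equals −A_{ij} for j < i, and equals 0 for j > i), where: for each i, A_{ii} = L_{ii} + D_i with L_{ii} ∈ ℝ^{n_i×n_i} the Laplacian matrix of a strongly connected weighted directed graph on n_i nodes and D_i a diagonal matrix with nonnegative entries; D_1 = 0; each A_{ij} (j < i) has nonnegative entries; and D_i 𝟏_{n_i} = Σ_{j=1}^{i−1} A_{ij} 𝟏_{n_j}, where 𝟏_n denotes the all-ones vector in ℝ^n. -/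

import Mathlib

open Finset

/-- In the weighted directed graph with weights `a` (an edge from node `j` to
node `i` whenever `a i j > 0`), node `j` is reachable from node `i`. -/
def Reachable {N : ℕ} (a : Fin N → Fin N → ℝ) : Fin N → Fin N → Prop :=
  Relation.ReflTransGen (fun u v => 0 < a v u)

/-- The Laplacian matrix of the weighted directed graph with weights `a`:
`[L]ᵢⱼ = −aᵢⱼ` for `i ≠ j` and `[L]ᵢᵢ = ∑_{ℓ≠i} aᵢℓ`. -/
def lap {N : ℕ} (a : Fin N → Fin N → ℝ) : Matrix (Fin N) (Fin N) ℝ :=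
  Matrix.of fun i j =>
    if i = j then ∑ ℓ ∈ Finset.univ.erase i, a i ℓ else -(a i j)

section Aux

variable {N : ℕ} (a : Fin N → Fin N → ℝ)

/-- Mutual-reachability setoid (strongly connected components). -/
def sccSetoid : Setoid (Fin N) where
  r x y := Reachable a x y ∧ Reachable a y x
  iseqv := ⟨fun _ => ⟨.refl, .refl⟩, fun h => ⟨h.2, h.1⟩,
    fun h1 h2 => ⟨h1.1.trans h2.1, h2.2.trans h1.2⟩⟩

/-- The condensation (set of SCCs). -/
def SCC := Quotient (sccSetoid a)

noncomputable instance : Fintype (SCC a) := by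
  classical exact Fintype.ofSurjective (Quotient.mk (sccSetoid a)) Quotient.mk_surjective

lemma scc_le_aux : True := trivial

instance : PartialOrder (SCC a) where
  le := Quotient.lift₂ (fun x y => Reachable a x y) (by
    intro a1 b1 a2 b2 h1 h2
    exact propext ⟨fun h => (h1.2.trans h).trans h2.1, fun h => (h1.1.trans h).trans h2.2⟩)
  le_refl := fun q => Quotient.inductionOn q fun _ => Relation.ReflTransGen.refl
  le_trans := fun q1 q2 q3 => Quotient.inductionOn₃ q1 q2 q3 fun _ _ _ h1 h2 => Relation.ReflTransGen.trans h1 h2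
  le_antisymm := fun q1 q2 => Quotient.inductionOn₂ q1 q2 fun _ _ h1 h2 =>
    Quotient.sound ⟨h1, h2⟩

lemma lap_offdiag (i j : Fin N) (h : i ≠ j) : lap a i j = -(a i j) := by
  simp [lap, h]

lemma lap_rowsum (i : Fin N) : ∑ l, lap a i l = 0 := by
  rw [← Finset.sum_erase_add _ _ (Finset.mem_univ i)]
  have h1 : ∑ l ∈ univ.erase i, lap a i l = ∑ l ∈ univ.erase i, -(a i l) :=
    Finset.sum_congr rfl fun l hl =>
      lap_offdiag a i l (Ne.symm (Finset.ne_of_mem_erase hl))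
  have h2 : lap a i i = ∑ l ∈ univ.erase i, a i l := by simp [lap]
  rw [h1, h2, Finset.sum_neg_distrib]
  ring

end Aux

/-- If the graph `G` (with Laplacian `L = lap a`) contains a directed spanning
tree but is not strongly connected, then there is a permutation `σ` (i.e. a
permutation matrix `T`; the permuted matrix `M := Tᵀ L T` is given by
`M k l = L (σ k) (σ l)`) and a partition of the indices into `m` consecutive
nonempty blocks (recorded by the monotone surjective block map
`b : Fin N → Fin m`), with `2 ≤ m ≤ N`, such that `M` is lower block
triangular with blocks `Aᵢᵢ` on the diagonal and `−Aᵢⱼ` (each `Aᵢⱼ`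
entrywise nonnegative) below the diagonal, where `Aᵢᵢ = Lᵢᵢ + Dᵢ` with `Lᵢᵢ`
the Laplacian of a strongly connected graph on block `i`, `Dᵢ` diagonal with
nonnegative diagonal `d`, `D₁ = 0`, and `Dᵢ 𝟏 = ∑_{j<i} Aᵢⱼ 𝟏`. -/
theorem laplacian_block_triangularization_of_spanning_tree
    (N : ℕ)
    (a : Fin N → Fin N → ℝ)
    (ha : ∀ i j : Fin N, i ≠ j → 0 ≤ a i j)
    (htree : ∃ r : Fin N, ∀ j : Fin N, Reachable a r j)
    (hnsc : ¬ ∀ i j : Fin N, Reachable a i j) :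
    ∃ (m : ℕ) (σ : Equiv.Perm (Fin N)) (b : Fin N → Fin m) (d : Fin N → ℝ),
      2 ≤ m ∧ m ≤ N ∧
      -- the blocks are consecutive and nonempty
      Monotone b ∧ Function.Surjective b ∧
      -- the blocks above the diagonal vanish
      (∀ k l : Fin N, b k < b l → lap a (σ k) (σ l) = 0) ∧
      -- the off-diagonal blocks `Aᵢⱼ`, `j < i`, have nonnegative entries
      (∀ k l : Fin N, b l < b k → lap a (σ k) (σ l) ≤ 0) ∧
      -- within each diagonal block `Aᵢᵢ`, off-diagonal entries are `≤ 0`,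
      -- i.e. `Lᵢᵢ` has nonpositive off-diagonal entries
      (∀ k l : Fin N, k ≠ l → b k = b l → lap a (σ k) (σ l) ≤ 0) ∧
      -- `Dᵢ` is diagonal with nonnegative entries `d`, and `D₁ = 0`
      (∀ k : Fin N, 0 ≤ d k) ∧
      (∀ k : Fin N, (b k : ℕ) = 0 → d k = 0) ∧
      -- `Dᵢ 𝟏 = ∑_{j<i} Aᵢⱼ 𝟏`
      (∀ k : Fin N,
        d k = ∑ l ∈ Finset.univ.filter (fun l : Fin N => b l < b k),
          -(lap a (σ k) (σ l))) ∧
      -- `Aᵢᵢ = Lᵢᵢ + Dᵢ` with `Lᵢᵢ` having zero row sums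
      (∀ k : Fin N,
        ∑ l ∈ Finset.univ.filter (fun l : Fin N => b l = b k),
          lap a (σ k) (σ l) = d k) ∧
      -- each `Lᵢᵢ` is the Laplacian of a strongly connected graph on block `i`
      (∀ i : Fin m, ∀ k l : Fin N, b k = i → b l = i →
        Relation.ReflTransGen
          (fun u v => b u = i ∧ b v = i ∧ lap a (σ v) (σ u) < 0) k l) := by
  classical
  set m := Fintype.card (SCC a) with hm
  letI : Fintype (LinearExtension (SCC a)) := (inferInstance : Fintype (SCC a))
  have hcard : Fintype.card (LinearExtension (SCC a)) = m := rfl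
  let e : LinearExtension (SCC a) ≃o Fin m := (monoEquivOfFin _ hcard).symm
  let f : Fin N → Fin m := fun x => e (toLinearExtension (Quotient.mk (sccSetoid a) x))
  -- monotonicity of `f` along reachability
  have hmono : ∀ x y : Fin N, Reachable a x y → f x ≤ f y := by
    intro x y h
    have h' : @LE.le (SCC a) _ (Quotient.mk (sccSetoid a) x) (Quotient.mk (sccSetoid a) y) := h
    exact e.monotone (toLinearExtension.monotone h')
  have hinj : ∀ x y : Fin N, f x = f y → (sccSetoid a).r x y := by
    intro x y h
    exact Quotient.exact (e.injective h)
  have hfsurj : Function.Surjective f := by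
    intro i
    obtain ⟨x, hx⟩ := Quotient.mk_surjective (s := sccSetoid a) (e.symm i)
    exact ⟨x, (congrArg e hx).trans (e.apply_symm_apply i)⟩
  let σ : Equiv.Perm (Fin N) := Tuple.sort f
  let b : Fin N → Fin m := f ∘ σ
  have hb : ∀ k, b k = f (σ k) := fun _ => rfl
  -- vanishing above the diagonal
  have hvanish : ∀ k l : Fin N, b k < b l → lap a (σ k) (σ l) = 0 := by
    intro k l hkl
    have hne : σ k ≠ σ l := by
      intro h
      rw [show k = l from σ.injective h] at hkl
      exact lt_irrefl _ hkl
    have hle : a (σ k) (σ l) ≤ 0 := by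
      by_contra hpos
      push_neg at hpos
      have : Reachable a (σ l) (σ k) := Relation.ReflTransGen.single hpos
      exact absurd (hmono _ _ this) (not_le.2 hkl)
    rw [lap_offdiag a _ _ hne]
    linarith [ha _ _ hne]
  have hoffle : ∀ k l : Fin N, k ≠ l → lap a (σ k) (σ l) ≤ 0 := by
    intro k l hkl
    have hne : σ k ≠ σ l := fun h => hkl (σ.injective h)
    rw [lap_offdiag a _ _ hne]
    linarith [ha _ _ hne]
  let d : Fin N → ℝ := fun k =>
    ∑ l ∈ Finset.univ.filter (fun l : Fin N => b l < b k), -(lap a (σ k) (σ l))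
  have hd_nonneg : ∀ k, 0 ≤ d k := by
    intro k
    apply Finset.sum_nonneg
    intro l hl
    simp only [Finset.mem_filter] at hl
    have hkl : k ≠ l := fun h => lt_irrefl _ (h ▸ hl.2)
    linarith [hoffle k l hkl]
  have hd0 : ∀ k, (b k : ℕ) = 0 → d k = 0 := by
    intro k hk
    apply Finset.sum_eq_zero
    intro l hl
    simp only [Finset.mem_filter] at hl
    have := hl.2
    rw [Fin.lt_def, hk] at this
    omega
  refine ⟨m, σ, b, d, ?_, ?_, ?_, ?_, hvanish, fun k l h => hoffle k l (fun hh => lt_irrefl _ (hh ▸ h)),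
    fun k l h _ => hoffle k l h, hd_nonneg, hd0, fun k => rfl, ?_, ?_⟩
  · -- 2 ≤ m
    push_neg at hnsc
    obtain ⟨i, j, hij⟩ := hnsc
    have hne : (Quotient.mk (sccSetoid a) i : SCC a) ≠ Quotient.mk (sccSetoid a) j := by
      intro h
      exact hij (Quotient.exact h).1
    rw [hm]
    exact Fintype.one_lt_card_iff.2 ⟨_, _, hne⟩
  · -- m ≤ N
    calc m ≤ Fintype.card (Fin N) :=
          Fintype.card_le_of_surjective (Quotient.mk (sccSetoid a)) Quotient.mk_surjective
      _ = N := Fintype.card_fin N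
  · exact Tuple.monotone_sort f
  · exact hfsurj.comp σ.surjective
  · -- row sums within a block
    intro k
    have htot : ∑ l, lap a (σ k) (σ l) = 0 := by
      rw [Equiv.sum_comp σ (fun l => lap a (σ k) l)]
      exact lap_rowsum a (σ k)
    have h := Finset.sum_filter_add_sum_filter_not (univ : Finset (Fin N))
      (fun l => b l < b k) (fun l => lap a (σ k) (σ l))
    have h2 := Finset.sum_filter_add_sum_filter_not
      ((univ : Finset (Fin N)).filter (fun l => ¬ b l < b k))
      (fun l => b l = b k) (fun l => lap a (σ k) (σ l))
    rw [Finset.filter_filter, Finset.filter_filter] at h2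
    have e1 : (univ : Finset (Fin N)).filter (fun l => ¬ b l < b k ∧ b l = b k)
        = univ.filter (fun l => b l = b k) := by
      apply Finset.filter_congr
      intro l _
      exact ⟨And.right, fun hh => ⟨by simp [hh], hh⟩⟩
    have e2 : (univ : Finset (Fin N)).filter (fun l => ¬ b l < b k ∧ ¬ b l = b k)
        = univ.filter (fun l => b k < b l) := by
      apply Finset.filter_congr
      intro l _
      constructor
      · rintro ⟨h1, h2⟩
        exact lt_of_le_of_ne (not_lt.1 h1) (Ne.symm h2)
      · intro hh
        exact ⟨fun hc => lt_irrefl _ (hc.trans hh), fun hc => lt_irrefl _ (hc ▸ hh)⟩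
    rw [e1, e2] at h2
    have h3 : ∑ l ∈ univ.filter (fun l => b k < b l), lap a (σ k) (σ l) = 0 := by
      apply Finset.sum_eq_zero
      intro l hl
      simp only [Finset.mem_filter] at hl
      exact hvanish k l hl.2
    have hd : d k = -∑ l ∈ univ.filter (fun l : Fin N => b l < b k), lap a (σ k) (σ l) := by
      simp [d, Finset.sum_neg_distrib]
    rw [htot] at h
    rw [h3] at h2
    rw [hd]
    linarith
  · -- strong connectivity within blocks
    -- first, paths staying inside an SCC
    have hpath : ∀ x y : Fin N, Reachable a x y → Reachable a y x →
        Relation.ReflTransGen (fun u v => f u = f x ∧ f v = f x ∧ lap a v u < 0) x y := by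
      intro x y hxy
      induction hxy with
      | refl => intro _; exact Relation.ReflTransGen.refl
      | @tail c y' hxc hstep ih =>
        intro hyx
        have hcy : Reachable a c y' := Relation.ReflTransGen.single hstep
        have hcx : Reachable a c x := hcy.trans hyx
        have hxcpath := ih hcx
        by_cases hcy' : c = y'
        · rw [← hcy']; exact hxcpath
        · refine hxcpath.tail ⟨?_, ?_, ?_⟩
          · exact le_antisymm (hmono _ _ hcx) (hmono _ _ hxc)
          · exact le_antisymm (hmono _ _ hyx) (hmono _ _ (hxc.tail hstep))
          · rw [lap_offdiag a _ _ (Ne.symm hcy')]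
            simpa using hstep
    intro i k l hk hl
    have hr : (sccSetoid a).r (σ k) (σ l) := hinj _ _ ((hb k ▸ hk).trans (hb l ▸ hl).symm)
    have hp := hpath (σ k) (σ l) hr.1 hr.2
    have hlift := Relation.ReflTransGen.lift (r := fun u v => f u = f (σ k) ∧ f v = f (σ k) ∧ lap a v u < 0)
      (p := fun u v => b u = i ∧ b v = i ∧ lap a (σ v) (σ u) < 0)
      (σ.symm : Fin N → Fin N) ?_ _ _ hp
    · simpa [Function.onFun] using hlift
    · rintro u v ⟨h1, h2, h3⟩
      refine ⟨?_, ?_, ?_⟩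
      · show f (σ (σ.symm u)) = i
        rw [Equiv.apply_symm_apply, h1, ← hb k, hk]
      · show f (σ (σ.symm v)) = i
        rw [Equiv.apply_symm_apply, h2, ← hb k, hk]
      · rw [Equiv.apply_symm_apply, Equiv.apply_symm_apply]
        exact h3
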